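/- Let R be a right po-coherent po-ring and let (A_i)_{i ∈ I} be a family of po-coherent partially ordered right R-modules. Then the direct sum ⊕_{i ∈ I} A_i, partially ordered coordinatewise, is a po-coherent partially ordered right R-module. -/

import Mathlib

/-- A *po-ring*: a ring equipped with a partial order such that addition is
translation-invariant, multiplication by nonnegative elements (on either side) is monotone,
the ring is directed (every element is a difference of two nonnegative elements),
and `0 ≤ 1`. -/
class PORing (R : Type*) extends Ring R, PartialOrder R where
  add_le_add_right' : ∀ a b : R, a ≤ b → ∀ c : R, a + c ≤ b + c
  mul_le_mul_of_nonneg_right' : ∀ a b c : R, a ≤ b → 0 ≤ c → a * c ≤ b * c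
  mul_le_mul_of_nonneg_left' : ∀ a b c : R, a ≤ b → 0 ≤ c → c * a ≤ c * b
  directed' : ∀ x : R, ∃ y z : R, 0 ≤ y ∧ 0 ≤ z ∧ x = y - z
  zero_le_one' : (0 : R) ≤ 1

/-- A *partially ordered right module* over a po-ring `R`: an additive abelian group with a
right `R`-action `rsmul` (written on the right, so `rsmul a ξ` is `aξ`), with the usual
right-module axioms, such that addition is translation-invariant and
`0 ≤ a`, `0 ≤ ξ` imply `0 ≤ aξ`. -/
class PORightModule (R : Type*) [PORing R] (A : Type*) [AddCommGroup A] [PartialOrder A] where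
  rsmul : A → R → A
  add_rsmul : ∀ (a b : A) (r : R), rsmul (a + b) r = rsmul a r + rsmul b r
  rsmul_add : ∀ (a : A) (r s : R), rsmul a (r + s) = rsmul a r + rsmul a s
  rsmul_mul : ∀ (a : A) (r s : R), rsmul a (r * s) = rsmul (rsmul a r) s
  rsmul_one : ∀ a : A, rsmul a 1 = a
  add_le_add_right' : ∀ a b : A, a ≤ b → ∀ c : A, a + c ≤ b + c
  rsmul_nonneg : ∀ (a : A) (r : R), 0 ≤ a → 0 ≤ r → 0 ≤ rsmul a r

open PORightModule

/-- A po-ring is a partially ordered right module over itself. -/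
instance PORing.toPORightModule (R : Type*) [PORing R] : PORightModule R R where
  rsmul := (· * ·)
  add_rsmul := add_mul
  rsmul_add := mul_add
  rsmul_mul a r s := (mul_assoc a r s).symm
  rsmul_one := mul_one
  add_le_add_right' := PORing.add_le_add_right'
  rsmul_nonneg a r ha hr := by
    have h := PORing.mul_le_mul_of_nonneg_right' 0 a r ha hr
    simpa using h

/-- Products of partially ordered right modules, ordered coordinatewise. -/
instance Pi.instPORightModule {R : Type*} [PORing R] {ι : Type*} {A : ι → Type*}
    [∀ i, AddCommGroup (A i)] [∀ i, PartialOrder (A i)] [∀ i, PORightModule R (A i)] :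
    PORightModule R (∀ i, A i) where
  rsmul x r i := rsmul (x i) r
  add_rsmul a b r := funext fun i => add_rsmul (a i) (b i) r
  rsmul_add a r s := funext fun i => rsmul_add (a i) r s
  rsmul_mul a r s := funext fun i => rsmul_mul (a i) r s
  rsmul_one a := funext fun i => rsmul_one (a i)
  add_le_add_right' a b h c := by
    intro i
    exact PORightModule.add_le_add_right' R (a i) (b i) (h i) (c i)
  rsmul_nonneg a r ha hr := by
    intro i
    exact PORightModule.rsmul_nonneg (a i) r (ha i) hr

/-- Binary products of partially ordered right modules, ordered coordinatewise. -/
instance Prod.instPORightModule {R : Type*} [PORing R] {A B : Type*}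
    [AddCommGroup A] [PartialOrder A] [PORightModule R A]
    [AddCommGroup B] [PartialOrder B] [PORightModule R B] :
    PORightModule R (A × B) where
  rsmul x r := (rsmul x.1 r, rsmul x.2 r)
  add_rsmul a b r := by
    refine Prod.ext ?_ ?_ <;> simp [PORightModule.add_rsmul]
  rsmul_add a r s := by
    refine Prod.ext ?_ ?_ <;> simp [PORightModule.rsmul_add]
  rsmul_mul a r s := by
    refine Prod.ext ?_ ?_ <;> simp [PORightModule.rsmul_mul]
  rsmul_one a := by
    refine Prod.ext ?_ ?_ <;> simp [PORightModule.rsmul_one]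
  add_le_add_right' a b h c := by
    rw [Prod.le_def] at h ⊢
    constructor
    · simpa using PORightModule.add_le_add_right' R a.1 b.1 h.1 c.1
    · simpa using PORightModule.add_le_add_right' R a.2 b.2 h.2 c.2
  rsmul_nonneg a r ha hr := by
    rw [Prod.le_def] at ha ⊢
    constructor
    · simpa using PORightModule.rsmul_nonneg a.1 r (by simpa using ha.1) hr
    · simpa using PORightModule.rsmul_nonneg a.2 r (by simpa using ha.2) hr

section Defs

variable (R : Type*) [PORing R]

/-- The product `UX = a₁ξ₁ + ⋯ + aₙξₙ` of a row matrix `U = (a₁,…,aₙ)` with entries in `A`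
and a column matrix `X = (ξ₁,…,ξₙ)ᵗ` with entries in `R`. -/
def rowMul {A : Type*} [AddCommGroup A] [PartialOrder A] [PORightModule R A]
    {n : ℕ} (U : Fin n → A) (X : Fin n → R) : A :=
  ∑ i, rsmul (U i) (X i)

/-- A subset `S` of a partially ordered right `R`-module is a *finitely generated
`R⁺`-subsemimodule* if it is the set of all `R⁺`-linear combinations of some finite subset. -/
def IsFGConeIn {A : Type*} [AddCommGroup A] [PartialOrder A] [PORightModule R A]
    (S : Set A) : Prop :=
  ∃ (k : ℕ) (g : Fin k → A),
    S = { a | ∃ Y : Fin k → R, (∀ i, 0 ≤ Y i) ∧ a = rowMul R g Y }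

/-- `A` is *finitely related at* the row matrix `U ∈ M_{1,n}(A)` if the solution set of the
mixed system `UX ≥ 0, X ≥ 0` is a finitely generated `R⁺`-subsemimodule of `M_{n,1}(R)`. -/
def FinitelyRelatedAt {A : Type*} [AddCommGroup A] [PartialOrder A] [PORightModule R A]
    {n : ℕ} (U : Fin n → A) : Prop :=
  IsFGConeIn R {X : Fin n → R | 0 ≤ rowMul R U X ∧ ∀ i, 0 ≤ X i}

/-- `A` is *finitely po-presented at* the row matrix `U ∈ M_{1,n}(A)` if the solution set of
the system `UX ≥ 0` is a finitely generated `R⁺`-subsemimodule of `M_{n,1}(R)`. -/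
def FinitelyPoPresentedAt {A : Type*} [AddCommGroup A] [PartialOrder A] [PORightModule R A]
    {n : ℕ} (U : Fin n → A) : Prop :=
  IsFGConeIn R {X : Fin n → R | 0 ≤ rowMul R U X}

/-- A row matrix `U` is *spanning* if its entries generate `A` as a right `R`-module, i.e.
every element of `A` is an `R`-linear combination `UX` of the entries. -/
def SpanningRow {A : Type*} [AddCommGroup A] [PartialOrder A] [PORightModule R A]
    {n : ℕ} (U : Fin n → A) : Prop :=
  ∀ a : A, ∃ X : Fin n → R, a = rowMul R U X

variable (A : Type*) [AddCommGroup A] [PartialOrder A] [PORightModule R A]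

/-- `A` is *finitely po-presented* if it is finitely po-presented at some spanning row
matrix. -/
def FinitelyPoPresented : Prop :=
  ∃ (n : ℕ) (U : Fin n → A), SpanningRow R U ∧ FinitelyPoPresentedAt R U

/-- `A` is *finitely related* if it is a finitely generated right `R`-module and is finitely
related at every spanning row matrix. -/
def FinitelyRelatedMod : Prop :=
  (∃ (n : ℕ) (U : Fin n → A), SpanningRow R U) ∧
    ∀ (n : ℕ) (U : Fin n → A), SpanningRow R U → FinitelyRelatedAt R U

/-- `A` is *po-coherent* if it is finitely related at every row matrix of elements of `A`. -/
def PoCoherent : Prop :=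
  ∀ (n : ℕ) (U : Fin n → A), FinitelyRelatedAt R U

end Defs

/-- A po-ring is *right po-coherent* if it is po-coherent as a partially ordered right module
over itself. -/
def RightPoCoherent (R : Type*) [PORing R] : Prop :=
  PoCoherent R R

theorem rsmul_zero_left {R : Type*} [PORing R] {A : Type*} [AddCommGroup A] [PartialOrder A]
    [PORightModule R A] (r : R) : rsmul (0 : A) r = (0 : A) := by
  have h := PORightModule.add_rsmul (0 : A) (0 : A) r
  rw [add_zero] at h
  simpa using h

/-- Direct sums of partially ordered right modules, ordered coordinatewise. -/
instance DFinsupp.instPORightModule {R : Type*} [PORing R] {ι : Type*} {A : ι → Type*}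
    [∀ i, AddCommGroup (A i)] [∀ i, PartialOrder (A i)] [∀ i, PORightModule R (A i)] :
    PORightModule R (Π₀ i, A i) where
  rsmul x r := x.mapRange (fun _ a => rsmul a r) (fun _ => rsmul_zero_left r)
  add_rsmul a b r := by
    ext i
    simp [PORightModule.add_rsmul]
  rsmul_add a r s := by
    ext i
    simp [PORightModule.rsmul_add]
  rsmul_mul a r s := by
    ext i
    simp [PORightModule.rsmul_mul]
  rsmul_one a := by
    ext i
    simp [PORightModule.rsmul_one]
  add_le_add_right' a b h c := by
    rw [DFinsupp.le_def] at h ⊢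
    intro i
    simp only [DFinsupp.add_apply]
    exact PORightModule.add_le_add_right' R (a i) (b i) (h i) (c i)
  rsmul_nonneg a r ha hr := by
    rw [DFinsupp.le_def] at ha ⊢
    intro i
    simp only [DFinsupp.mapRange_apply, DFinsupp.coe_zero, Pi.zero_apply] at ha ⊢
    exact PORightModule.rsmul_nonneg (a i) r (ha i) hr

section AuxLemmas

variable {R : Type*} [PORing R]

theorem rsmul_zero_right' {A : Type*} [AddCommGroup A] [PartialOrder A]
    [PORightModule R A] (a : A) : rsmul a (0 : R) = (0 : A) := by
  have h := PORightModule.rsmul_add a (0 : R) 0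
  rw [add_zero] at h
  exact left_eq_add.mp h

theorem sum_rsmul' {A : Type*} [AddCommGroup A] [PartialOrder A] [PORightModule R A]
    {σ : Type*} (t : Finset σ) (f : σ → A) (r : R) :
    rsmul (∑ j ∈ t, f j) r = ∑ j ∈ t, rsmul (f j) r := by
  classical
  induction t using Finset.induction_on with
  | empty => simp [rsmul_zero_left]
  | insert _ _ hnot ih =>
      rw [Finset.sum_insert hnot, Finset.sum_insert hnot, PORightModule.add_rsmul, ih]

theorem rsmul_sum' {A : Type*} [AddCommGroup A] [PartialOrder A] [PORightModule R A]
    {σ : Type*} (t : Finset σ) (a : A) (f : σ → R) :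
    rsmul a (∑ j ∈ t, f j) = ∑ j ∈ t, rsmul a (f j) := by
  classical
  induction t using Finset.induction_on with
  | empty => simp [rsmul_zero_right']
  | insert _ _ hnot ih =>
      rw [Finset.sum_insert hnot, Finset.sum_insert hnot, PORightModule.rsmul_add, ih]

theorem rowMul_comp' {A : Type*} [AddCommGroup A] [PartialOrder A] [PORightModule R A]
    {n k : ℕ} (U : Fin n → A) (g : Fin k → Fin n → R) (Y : Fin k → R) :
    rowMul R U (rowMul R g Y) = rowMul R (fun p => rowMul R U (g p)) Y := by
  unfold rowMul
  have hpi : ∀ j, (∑ p, rsmul (g p) (Y p)) j = ∑ p, (g p j) * (Y p) := by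
    intro j; rw [Finset.sum_apply]; rfl
  calc ∑ j, rsmul (U j) ((∑ p, rsmul (g p) (Y p)) j)
      = ∑ j, ∑ p, rsmul (rsmul (U j) (g p j)) (Y p) := by
        refine Finset.sum_congr rfl fun j _ => ?_
        rw [hpi, rsmul_sum']
        exact Finset.sum_congr rfl fun p _ => PORightModule.rsmul_mul (U j) (g p j) (Y p)
    _ = ∑ p, ∑ j, rsmul (rsmul (U j) (g p j)) (Y p) := Finset.sum_comm
    _ = ∑ p, rsmul (∑ j, rsmul (U j) (g p j)) (Y p) := by
        exact Finset.sum_congr rfl fun p _ => (sum_rsmul' _ _ _).symm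

theorem rowMul_dfinsupp_apply' {ι : Type*} {A : ι → Type*}
    [∀ i, AddCommGroup (A i)] [∀ i, PartialOrder (A i)] [∀ i, PORightModule R (A i)]
    {n : ℕ} (U : Fin n → Π₀ i, A i) (X : Fin n → R) (i : ι) :
    (rowMul R U X) i = rowMul R (fun j => U j i) X := by
  unfold rowMul
  rw [DFinsupp.finset_sum_apply]
  rfl

theorem key_cone_lemma {ι : Type*} {A : ι → Type*}
    [∀ i, AddCommGroup (A i)] [∀ i, PartialOrder (A i)] [∀ i, PORightModule R (A i)]
    (hR : RightPoCoherent R) (hA : ∀ i, PoCoherent R (A i))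
    {n : ℕ} (U : Fin n → Π₀ i, A i) (s : Finset ι) :
    IsFGConeIn R {X : Fin n → R |
      (∀ i ∈ s, 0 ≤ rowMul R (fun j => U j i) X) ∧ ∀ j, 0 ≤ X j} := by
  classical
  induction s using Finset.induction_on with
  | empty =>
      obtain ⟨k, g, hg⟩ := hR n (fun _ => (0 : R))
      refine ⟨k, g, ?_⟩
      rw [← hg]
      ext X
      have h0 : rowMul R (fun _ => (0 : R)) X = 0 := by
        simp [rowMul, rsmul_zero_left]
      simp [Set.mem_setOf_eq, h0]
  | @insert i s hnot ih =>
      obtain ⟨k, g, hg⟩ := ih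
      set V : Fin k → A i := fun m => rowMul R (fun j => U j i) (g m) with hV
      obtain ⟨l, h, hh⟩ := hA i k V
      refine ⟨l, fun p => rowMul R g (h p), ?_⟩
      ext X
      simp only [Set.mem_setOf_eq]
      constructor
      · rintro ⟨hins, hX⟩
        have hXs : X ∈ {X : Fin n → R |
            (∀ i' ∈ s, 0 ≤ rowMul R (fun j => U j i') X) ∧ ∀ j, 0 ≤ X j} :=
          ⟨fun i' hi' => hins i' (Finset.mem_insert_of_mem hi'), hX⟩
        rw [hg] at hXs
        obtain ⟨Y, hY, hXY⟩ := hXs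
        have hEq : rowMul R (fun j => U j i) X = rowMul R V Y := by
          rw [hXY, rowMul_comp']
        have hYmem : Y ∈ {Y : Fin k → R | 0 ≤ rowMul R V Y ∧ ∀ m, 0 ≤ Y m} :=
          ⟨by rw [← hEq]; exact hins i (Finset.mem_insert_self i s), hY⟩
        rw [hh] at hYmem
        obtain ⟨Z, hZ, hYZ⟩ := hYmem
        exact ⟨Z, hZ, by rw [hXY, hYZ, rowMul_comp']⟩
      · rintro ⟨Z, hZ, hXZ⟩
        have hYmem : rowMul R h Z ∈ {Y : Fin k → R | 0 ≤ rowMul R V Y ∧ ∀ m, 0 ≤ Y m} := by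
          rw [hh]; exact ⟨Z, hZ, rfl⟩
        obtain ⟨hVY, hYpos⟩ := hYmem
        have hXY : X = rowMul R g (rowMul R h Z) := by
          rw [hXZ, rowMul_comp']
        have hXs : X ∈ {X : Fin n → R |
            (∀ i' ∈ s, 0 ≤ rowMul R (fun j => U j i') X) ∧ ∀ j, 0 ≤ X j} := by
          rw [hg]; exact ⟨rowMul R h Z, hYpos, hXY⟩
        obtain ⟨hs', hXpos⟩ := hXs
        refine ⟨fun i' hi' => ?_, hXpos⟩
        rcases Finset.mem_insert.mp hi' with rfl | hi'
        · have : rowMul R (fun j => U j i') X = rowMul R V (rowMul R h Z) := by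
            rw [hXY, rowMul_comp']
          rw [this]; exact hVY
        · exact hs' i' hi'

end AuxLemmas

/-- Let `R` be a right po-coherent po-ring and `(A i)_{i ∈ I}` a family of
po-coherent partially ordered right `R`-modules.  Then the direct sum `⊕_{i ∈ I} A i`
(realized as the finitely supported dependent functions `Π₀ i, A i`), partially ordered
coordinatewise, is a po-coherent partially ordered right `R`-module. -/
theorem poCoherent_directSum
    (R : Type*) [PORing R] {ι : Type*} (A : ι → Type*)
    [∀ i, AddCommGroup (A i)] [∀ i, PartialOrder (A i)] [∀ i, PORightModule R (A i)]
    (hR : RightPoCoherent R) (hA : ∀ i, PoCoherent R (A i)) :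
    PoCoherent R (Π₀ i, A i) := by
  classical
  intro n U
  set s : Finset ι := Finset.univ.biUnion (fun j => (U j).support) with hs
  have hout : ∀ i ∉ s, ∀ X : Fin n → R, rowMul R (fun j => U j i) X = 0 := by
    intro i hi X
    have hU : ∀ j, U j i = 0 := by
      intro j
      by_contra hne
      exact hi (Finset.mem_biUnion.mpr ⟨j, Finset.mem_univ j,
        DFinsupp.mem_support_iff.mpr hne⟩)
    simp [rowMul, hU, rsmul_zero_left]
  have hset : {X : Fin n → R | 0 ≤ rowMul R U X ∧ ∀ j, 0 ≤ X j} =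
      {X : Fin n → R | (∀ i ∈ s, 0 ≤ rowMul R (fun j => U j i) X) ∧ ∀ j, 0 ≤ X j} := by
    ext X
    simp only [Set.mem_setOf_eq]
    constructor
    · rintro ⟨hle, hX⟩
      refine ⟨fun i _ => ?_, hX⟩
      rw [← rowMul_dfinsupp_apply']
      exact (DFinsupp.le_def.mp hle) i
    · rintro ⟨hle, hX⟩
      refine ⟨DFinsupp.le_def.mpr fun i => ?_, hX⟩
      show (0 : Π₀ i, A i) i ≤ _
      rw [DFinsupp.coe_zero, Pi.zero_apply, rowMul_dfinsupp_apply']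
      by_cases hi : i ∈ s
      · exact hle i hi
      · rw [hout i hi X]
  unfold FinitelyRelatedAt
  rw [hset]
  exact key_cone_lemma hR hA U s
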